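/- Let 𝔛 be a locally small cocomplete category and let f : A → C, g : A → B, h : B → C be arrows with f = h ∘ g. If g is a compact arrow, then f is compact if and only if h is compact. In particular, compact arrows are closed under composition and satisfy the right cancellation property. -/

import Mathlib

open CategoryTheory CategoryTheory.Limits Opposite

universe v u

namespace CompactArrows

variable {C : Type u} [Category.{v} C]

/-- The cocone on `D ⋙ Hom(X, -)` induced by a cocone on `D`. -/
def homCocone {J : Type v} [SmallCategory J] {D : J ⥤ C} (c : Cocone D) (X : C) :
    Cocone (D ⋙ coyoneda.obj (op X)) where
  pt := X ⟶ c.pt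
  ι :=
    { app := fun j => TypeCat.ofHom fun (g : X ⟶ D.obj j) => g ≫ c.ι.app j
      naturality := by
        intro j j' t
        ext g
        simp }

/-- The canonical comparison map `colim_j Hom(X, D_j) ⟶ Hom(X, colim D)`,
relative to a chosen (co)limiting cocone `c` on `D`. -/
noncomputable def canMap {J : Type v} [SmallCategory J] {D : J ⥤ C} (c : Cocone D) (X : C) :
    colimit (D ⋙ coyoneda.obj (op X)) ⟶ (X ⟶ c.pt) :=
  colimit.desc _ (homCocone c X)

/-- `X` is a compact object: `Hom(X, -)` preserves small filtered colimits. -/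
def CompactObj (X : C) : Prop :=
  ∀ (J : Type v) (_ : SmallCategory J) (_ : IsFiltered J) (D : J ⥤ C) (c : Cocone D),
    IsColimit c → IsIso (canMap c X)

/-- `f : A ⟶ B` is a compact arrow: for every small filtered diagram `D` the comparison
square between `colim_j Hom(B, D_j) → Hom(B, colim D)` and
`colim_j Hom(A, D_j) → Hom(A, colim D)` (via precomposition with `f`) is a pullback of sets. -/
def CompactArrow {A B : C} (f : A ⟶ B) : Prop :=
  ∀ (J : Type v) (_ : SmallCategory J) (_ : IsFiltered J) (D : J ⥤ C) (c : Cocone D),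
    IsColimit c →
      IsPullback (canMap c B)
        (colimMap (Functor.whiskerLeft D (coyoneda.map f.op)))
        (TypeCat.ofHom fun (g : B ⟶ c.pt) => f ≫ g)
        (canMap c A)

end CompactArrows

open CompactArrows

/-- if `f = h ∘ g` and `g` is a compact arrow, then `f` is compact iff `h`
is compact; in particular compact arrows are closed under composition and have the right
cancellation property. -/
theorem compactArrow_comp_iff_cancellation
    {C : Type u} [Category.{v} C] [HasColimits C]
    {A B Z : C} (f : A ⟶ Z) (g : A ⟶ B) (h : B ⟶ Z)
    (hfac : f = g ≫ h) (hg : CompactArrow g) :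
    CompactArrow f ↔ CompactArrow h := by
  have key : ∀ (J : Type v) (i : SmallCategory J) (fil : IsFiltered J) (D : J ⥤ C)
      (c : Cocone D) (hc : IsColimit c),
      (IsPullback (canMap c Z) (colimMap (Functor.whiskerLeft D (coyoneda.map f.op)))
        (TypeCat.ofHom fun k : Z ⟶ c.pt => f ≫ k) (canMap c A)) ↔
      (IsPullback (canMap c Z) (colimMap (Functor.whiskerLeft D (coyoneda.map h.op)))
        (TypeCat.ofHom fun k : Z ⟶ c.pt => h ≫ k) (canMap c B)) := by
    intro J i fil D c hc
    have e1 : colimMap (Functor.whiskerLeft D (coyoneda.map f.op)) =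
        colimMap (Functor.whiskerLeft D (coyoneda.map h.op)) ≫
          colimMap (Functor.whiskerLeft D (coyoneda.map g.op)) := by
      apply colimit.hom_ext
      intro j
      simp only [ι_colimMap_assoc, ι_colimMap]
      ext k
      simp [hfac]
    have e2 : (TypeCat.ofHom fun k : Z ⟶ c.pt => f ≫ k) =
        (show (Z ⟶ c.pt) ⟶ (B ⟶ c.pt) from TypeCat.ofHom fun k => h ≫ k) ≫
          (show (B ⟶ c.pt) ⟶ (A ⟶ c.pt) from TypeCat.ofHom fun k => g ≫ k) := by
      ext k
      simp [hfac]
    have comm : canMap c Z ≫ (TypeCat.ofHom fun k : Z ⟶ c.pt => h ≫ k) =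
        colimMap (Functor.whiskerLeft D (coyoneda.map h.op)) ≫ canMap c B := by
      apply colimit.hom_ext
      intro j
      ext k
      simp [canMap, homCocone]
    rw [e1, e2]
    exact IsPullback.paste_vert_iff (hg J i fil D c hc) comm
  constructor
  · intro hf J i fil D c hc
    exact (key J i fil D c hc).mp (hf J i fil D c hc)
  · intro hh J i fil D c hc
    exact (key J i fil D c hc).mpr (hh J i fil D c hc)
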